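/- Let x = [a,b], y = [b,c], z = a y a, t = c x c y⁻¹ x⁻¹, w = a t a in IMG(z²+i). Then the wreath recursions y = (x,1), z = (1,x), t = (y,1), and w = (1,y) hold. -/

import Mathlib

/-- The generator `a = (1,1)σ` of `IMG(z²+i)`, acting on the binary rooted tree
whose vertices are finite binary words. -/
def aF : List Bool → List Bool
  | [] => []
  | x :: s => (!x) :: s

mutual
/-- The generator `b = (a, c)` of `IMG(z²+i)`. -/
def bF : List Bool → List Bool
  | [] => []
  | false :: s => false :: aF s
  | true :: s => true :: cF s
/-- The generator `c = (b, 1)` of `IMG(z²+i)`. -/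
def cF : List Bool → List Bool
  | [] => []
  | false :: s => false :: bF s
  | true :: s => true :: s
end

theorem aF_invol : ∀ s, aF (aF s) = s := by
  intro s; cases s <;> simp [aF]

theorem bcF_invol : ∀ s, bF (bF s) = s ∧ cF (cF s) = s := by
  intro s
  induction s with
  | nil => exact ⟨rfl, rfl⟩
  | cons x s ih =>
    cases x <;> exact ⟨by simp [bF, ih.1, ih.2, aF_invol], by simp [cF, ih.1]⟩

/-- `a` as a tree automorphism. -/
def aE : Equiv.Perm (List Bool) := ⟨aF, aF, aF_invol, aF_invol⟩
/-- `b` as a tree automorphism. -/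
def bE : Equiv.Perm (List Bool) := ⟨bF, bF, fun s => (bcF_invol s).1, fun s => (bcF_invol s).1⟩
/-- `c` as a tree automorphism. -/
def cE : Equiv.Perm (List Bool) := ⟨cF, cF, fun s => (bcF_invol s).2, fun s => (bcF_invol s).2⟩

open scoped commutatorElement

/-- `x = [a,b]`. -/
def xE : Equiv.Perm (List Bool) := ⁅aE, bE⁆
/-- `y = [b,c]`. -/
def yE : Equiv.Perm (List Bool) := ⁅bE, cE⁆
/-- `z = a y a`. -/
def zE : Equiv.Perm (List Bool) := aE * yE * aE
/-- `t = c x c y⁻¹ x⁻¹`. -/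
def tE : Equiv.Perm (List Bool) := cE * xE * cE * yE⁻¹ * xE⁻¹
/-- `w = a t a`. -/
def wE : Equiv.Perm (List Bool) := aE * tE * aE


lemma xE_app (s : List Bool) : xE s = aF (bF (aF (bF s))) := rfl
lemma xE_inv_app (s : List Bool) : xE⁻¹ s = bF (aF (bF (aF s))) := rfl
lemma yE_app (s : List Bool) : yE s = bF (cF (bF (cF s))) := rfl
lemma yE_inv_app (s : List Bool) : yE⁻¹ s = cF (bF (cF (bF s))) := rfl
lemma zE_app (s : List Bool) : zE s = aF (bF (cF (bF (cF (aF s))))) := rfl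
lemma tE_app (s : List Bool) : tE s = cF (aF (bF (aF (bF (cF (cF (bF (cF (bF (bF (aF (bF (aF s))))))))))))) := rfl
lemma wE_app (s : List Bool) :
    wE s = aF (cF (aF (bF (aF (bF (cF (cF (bF (cF (bF (bF (aF (bF (aF (aF s))))))))))))))) := rfl


lemma bF_bF (s : List Bool) : bF (bF s) = s := (bcF_invol s).1
lemma cF_cF (s : List Bool) : cF (cF s) = s := (bcF_invol s).2
lemma aF_cons (x : Bool) (s : List Bool) : aF (x :: s) = (!x) :: s := rfl
lemma bF_false (s : List Bool) : bF (false :: s) = false :: aF s := rfl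
lemma bF_true (s : List Bool) : bF (true :: s) = true :: cF s := rfl
lemma cF_false (s : List Bool) : cF (false :: s) = false :: bF s := rfl
lemma cF_true (s : List Bool) : cF (true :: s) = true :: s := rfl

/-- The wreath recursions `y = (x,1)`, `z = (1,x)`, `t = (y,1)`, `w = (1,y)`
hold, where `(g₀,g₁)` records the two first-level sections of a first-level-stabilizing
automorphism of the binary tree. -/
theorem stmt_10 : ∀ s : List Bool,
    (yE (false :: s) = false :: xE s ∧ yE (true :: s) = true :: s) ∧
    (zE (false :: s) = false :: s ∧ zE (true :: s) = true :: xE s) ∧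
    (tE (false :: s) = false :: yE s ∧ tE (true :: s) = true :: s) ∧
    (wE (false :: s) = false :: s ∧ wE (true :: s) = true :: yE s) := by
  intro s
  refine ⟨⟨?_, ?_⟩, ⟨?_, ?_⟩, ⟨?_, ?_⟩, ⟨?_, ?_⟩⟩ <;>
    simp only [xE_app, yE_app, zE_app, tE_app, wE_app, aF_cons, bF_false, bF_true, cF_false, cF_true, aF_invol, bF_bF, cF_cF, Bool.not_true, Bool.not_false]
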